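/- arXiv:1509.01852 — 7 statements merged into one kernel-verified Lean document; each statement's English description precedes it below -/
import Mathlib

section
/- The size of partitions is supermodular: for all partitions P, Q of Fin n, s(P ⊔ Q) + s(P ⊓ Q) ≥ s(P) + s(Q). -/
open scoped BigOperators

/-- The size `s(P)` of a partition `P` of `Fin n`: the number of unordered pairs
`{i,j}` of distinct elements of `Fin n` that are `P`-equivalent (counted as
ordered pairs `(i,j)` with `i < j`). -/
noncomputable def partSize (n : ℕ) (P : Setoid (Fin n)) : ℕ :=
  Set.ncard {p : Fin n × Fin n | p.1 < p.2 ∧ P.r p.1 p.2}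

/-- The size of partitions is supermodular:
`s(P ⊔ Q) + s(P ⊓ Q) ≥ s(P) + s(Q)`. -/
theorem partSize_supermodular (n : ℕ) (P Q : Setoid (Fin n)) :
    partSize n P + partSize n Q ≤ partSize n (P ⊔ Q) + partSize n (P ⊓ Q) := by
  set A := {p : Fin n × Fin n | p.1 < p.2 ∧ P.r p.1 p.2}
  set B := {p : Fin n × Fin n | p.1 < p.2 ∧ Q.r p.1 p.2}
  have hinter : A ∩ B = {p : Fin n × Fin n | p.1 < p.2 ∧ (P ⊓ Q).r p.1 p.2} := by
    ext p
    constructor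
    · rintro ⟨⟨h1, h2⟩, ⟨_, h3⟩⟩; exact ⟨h1, h2, h3⟩
    · rintro ⟨h1, h2, h3⟩; exact ⟨⟨h1, h2⟩, ⟨h1, h3⟩⟩
  have hsub : A ∪ B ⊆ {p : Fin n × Fin n | p.1 < p.2 ∧ (P ⊔ Q).r p.1 p.2} := by
    rintro p (⟨h1, h2⟩ | ⟨h1, h2⟩)
    · exact ⟨h1, le_sup_left (α := Setoid (Fin n)) (a := P) (b := Q) h2⟩
    · exact ⟨h1, le_sup_right (α := Setoid (Fin n)) (a := P) (b := Q) h2⟩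
  have key := Set.ncard_union_add_ncard_inter A B
  unfold partSize
  rw [← hinter]
  calc A.ncard + B.ncard = (A ∪ B).ncard + (A ∩ B).ncard := key.symm
    _ ≤ _ := by
        exact add_le_add (Set.ncard_le_ncard hsub (Set.toFinite _)) le_rfl
end

section
/- For every partition P of Fin n (n ≥ 1) there exists a complement Q of P (i.e. P ⊓ Q = ⊥ and P ⊔ Q = ⊤) with s(Q) = |P|·(|P|−1)/2, and hence HD(P,Q) = s(P) + |P|·(|P|−1)/2; i.e. the upper bound s(P) + C(|P|,2) on the Hamming distance from P to its complements is always attained. -/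
open scoped BigOperators

/-- Hamming distance between partitions: `HD(P,Q) = s(P) + s(Q) - 2 s(P ⊓ Q)`. -/
noncomputable def HD (n : ℕ) (P Q : Setoid (Fin n)) : ℤ :=
  (partSize n P : ℤ) + (partSize n Q : ℤ) - 2 * (partSize n (P ⊓ Q) : ℤ)

/-- Number of blocks (equivalence classes) of a partition. -/
noncomputable def numBlocks (n : ℕ) (P : Setoid (Fin n)) : ℕ :=
  Nat.card (Quotient P)

lemma card_lt_pairs {α : Type*} [LinearOrder α] [DecidableEq α] (s : Finset α) :
    ((s ×ˢ s).filter fun p => p.1 < p.2).card = s.card * (s.card - 1) / 2 := by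
  set f := (s ×ˢ s).filter fun p : α × α => p.1 < p.2 with hf
  set g := (s ×ˢ s).filter fun p : α × α => p.2 < p.1 with hg
  have hcard : f.card = g.card := by
    apply Finset.card_bij' (fun p _ => (p.2, p.1)) (fun p _ => (p.2, p.1)) <;>
      intro p hp <;>
      simp only [hf, hg, Finset.mem_filter, Finset.mem_product] at * <;> tauto
  have hdisj : Disjoint f g := by
    rw [hf, hg, Finset.disjoint_filter]
    intro p _ h1 h2
    exact absurd h2 (not_lt.2 h1.le)
  have hunion : f ∪ g = s.offDiag := by
    rw [hf, hg, ← Finset.filter_or]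
    ext ⟨a, b⟩
    simp only [Finset.mem_filter, Finset.mem_product, Finset.mem_offDiag, ne_iff_lt_or_gt,
      gt_iff_lt]
    tauto
  have h2 : f.card + g.card = s.card * s.card - s.card := by
    rw [← Finset.card_union_of_disjoint hdisj, hunion, Finset.offDiag_card]
  have h3 : s.card * s.card - s.card = s.card * (s.card - 1) := by
    cases s.card with
    | zero => simp
    | succ k => simp [Nat.succ_sub_one, Nat.mul_succ, Nat.succ_mul]
  omega

lemma partSize_bot (n : ℕ) : partSize n (⊥ : Setoid (Fin n)) = 0 := by
  unfold partSize
  convert Set.ncard_empty (Fin n × Fin n)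
  ext p
  simp only [Set.mem_setOf_eq, Set.mem_empty_iff_false, iff_false, not_and]
  intro hlt hrel
  have : p.1 = p.2 := hrel
  exact absurd this hlt.ne

/-- The upper bound `s(P) + C(|P|,2)` on the Hamming distance from `P` to its
complements is always attained: there is a complement `Q` of `P` with
`s(Q) = |P|(|P|-1)/2`, hence `HD(P,Q) = s(P) + |P|(|P|-1)/2`. -/
theorem HD_complement_upper_bound_attained (n : ℕ) (hn : 1 ≤ n) (P : Setoid (Fin n)) :
    ∃ Q : Setoid (Fin n), P ⊓ Q = ⊥ ∧ P ⊔ Q = ⊤ ∧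
      partSize n Q = numBlocks n P * (numBlocks n P - 1) / 2 ∧
      HD n P Q = (partSize n P : ℤ) + ((numBlocks n P * (numBlocks n P - 1) / 2 : ℕ) : ℤ) := by
  classical
  set r : Fin n → Fin n := fun x => (Quotient.mk P x).out with hr_def
  have hrel : ∀ x, P.r (r x) x := fun x => Quotient.exact (Quotient.out_eq _)
  have hidem : ∀ x, r (r x) = r x := by
    intro x
    show ((Quotient.mk P ((Quotient.mk P x).out)).out) = _
    rw [Quotient.out_eq]
  set Q : Setoid (Fin n) := ⟨fun x y => x = y ∨ (r x = x ∧ r y = y), ⟨fun x => Or.inl rfl,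
    fun h => by tauto, fun h1 h2 => by rcases h1 with h | h <;> rcases h2 with h' | h' <;>
      subst_vars <;> tauto⟩⟩ with hQ_def
  have hQrel : ∀ x y, Q.r x y ↔ (x = y ∨ (r x = x ∧ r y = y)) := fun x y => Iff.rfl
  -- inf = ⊥
  have hinf : P ⊓ Q = ⊥ := by
    apply le_antisymm _ bot_le
    rw [Setoid.le_def]
    intro x y hxy
    have h1 : P.r x y ∧ Q.r x y := hxy
    show x = y
    rcases h1.2 with h | ⟨hx, hy⟩
    · exact h
    · have hmk : Quotient.mk P x = Quotient.mk P y := Quotient.sound h1.1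
      calc x = r x := hx.symm
        _ = r y := by rw [hr_def]; simp only; rw [hmk]
        _ = y := hy
  -- sup = ⊤
  have hsup : P ⊔ Q = ⊤ := by
    rw [eq_top_iff, Setoid.le_def]
    intro x y _
    show (P ⊔ Q) x y
    have hP : P ≤ P ⊔ Q := le_sup_left
    have hQ : Q ≤ P ⊔ Q := le_sup_right
    exact (P ⊔ Q).trans' (Setoid.le_def.mp hP (P.symm' (hrel x)))
      ((P ⊔ Q).trans' (Setoid.le_def.mp hQ (Or.inr ⟨hidem x, hidem y⟩))
        (Setoid.le_def.mp hP (hrel y)))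
  -- counting
  set T : Finset (Fin n) := Finset.univ.filter (fun x => r x = x) with hT_def
  have hTcard : T.card = numBlocks n P := by
    have h1 : (T : Set (Fin n)) = Set.range (Quotient.out : Quotient P → Fin n) := by
      ext x
      simp only [hT_def, Finset.coe_filter, Finset.mem_univ, true_and, Set.mem_setOf_eq,
        Set.mem_range]
      constructor
      · intro hx
        exact ⟨Quotient.mk P x, hx⟩
      · rintro ⟨q, rfl⟩
        show ((Quotient.mk P q.out).out) = _
        rw [Quotient.out_eq]
    have h2 : Nat.card (Quotient P) = (Set.range (Quotient.out : Quotient P → Fin n)).ncard := by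
      rw [← Nat.card_coe_set_eq, Nat.card_range_of_injective Quotient.out_injective]
    rw [numBlocks, h2, ← h1, Set.ncard_coe_finset]
  have hpsQ : partSize n Q = numBlocks n P * (numBlocks n P - 1) / 2 := by
    have hset : {p : Fin n × Fin n | p.1 < p.2 ∧ Q.r p.1 p.2}
        = ↑((T ×ˢ T).filter fun p => p.1 < p.2) := by
      ext p
      simp only [Set.mem_setOf_eq, Finset.coe_filter, Finset.mem_product, hT_def,
        Finset.mem_filter, Finset.mem_univ, true_and]
      constructor
      · rintro ⟨hlt, h | ⟨h1, h2⟩⟩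
        · exact absurd h hlt.ne
        · exact ⟨⟨h1, h2⟩, hlt⟩
      · rintro ⟨⟨h1, h2⟩, hlt⟩
        exact ⟨hlt, Or.inr ⟨h1, h2⟩⟩
    rw [partSize, hset, Set.ncard_coe_finset, card_lt_pairs, hTcard]
  refine ⟨Q, hinf, hsup, hpsQ, ?_⟩
  rw [HD, hinf, partSize_bot, hpsQ]
  push_cast
  ring
end

section
/- Let f be a symmetric, strictly order-preserving partition function on Setoid (Fin n). If f is supermodular, then the minimum-f-weight partition distance is δ_f(P,Q) = f(P) + f(Q) − 2·f(P ⊓ Q) for all partitions P, Q; if instead f is submodular, then δ_f(P,Q) = 2·f(P ⊔ Q) − f(P) − f(Q) for all partitions P, Q. -/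
open scoped BigOperators

/-- The Hasse-diagram graph of the partition lattice: `P` and `Q` are adjacent
iff one covers the other. -/
def hasse (n : ℕ) : SimpleGraph (Setoid (Fin n)) where
  Adj P Q := P ⋖ Q ∨ Q ⋖ P
  symm := ⟨fun P Q h => h.symm⟩
  loopless := ⟨fun P h => by cases h with
    | inl h => exact lt_irrefl P h.lt
    | inr h => exact lt_irrefl P h.lt⟩

/-- The weight of an edge `{P,Q}` induced by `f`: `|f(P) - f(Q)|`. -/
noncomputable def eWeight {n : ℕ} (f : Setoid (Fin n) → ℝ) : Sym2 (Setoid (Fin n)) → ℝ :=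
  Sym2.lift ⟨fun P Q => |f P - f Q|, fun P Q => abs_sub_comm (f P) (f Q)⟩

/-- The weight of a walk in the Hasse diagram: the sum of its edge weights. -/
noncomputable def walkWeight {n : ℕ} (f : Setoid (Fin n) → ℝ) {P Q : Setoid (Fin n)}
    (W : (hasse n).Walk P Q) : ℝ :=
  (W.edges.map (eWeight f)).sum

/-- The minimum-`f`-weight distance `δ_f(P,Q)`: the minimum weight of a walk
from `P` to `Q` in the Hasse diagram. -/
noncomputable def deltaW {n : ℕ} (f : Setoid (Fin n) → ℝ) (P Q : Setoid (Fin n)) : ℝ :=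
  sInf {w : ℝ | ∃ W : (hasse n).Walk P Q, walkWeight f W = w}

instance fin_setoid_finite (n : ℕ) : Finite (Setoid (Fin n)) :=
  Finite.of_injective (fun s : Setoid (Fin n) => s.r)
    fun a b h => Setoid.ext fun x y => by rw [show a.r = b.r from h]

lemma eWeight_mk {n : ℕ} (f : Setoid (Fin n) → ℝ) (A B : Setoid (Fin n)) :
    eWeight f s(A, B) = |f A - f B| := rfl

lemma walkWeight_cons {n : ℕ} (f : Setoid (Fin n) → ℝ) {A B C : Setoid (Fin n)}
    (h : (hasse n).Adj A B) (W : (hasse n).Walk B C) :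
    walkWeight f (SimpleGraph.Walk.cons h W) = eWeight f s(A, B) + walkWeight f W := by
  simp [walkWeight]

lemma walkWeight_append {n : ℕ} (f : Setoid (Fin n) → ℝ) {A B C : Setoid (Fin n)}
    (W₁ : (hasse n).Walk A B) (W₂ : (hasse n).Walk B C) :
    walkWeight f (W₁.append W₂) = walkWeight f W₁ + walkWeight f W₂ := by
  simp [walkWeight, SimpleGraph.Walk.edges_append]

lemma walkWeight_reverse {n : ℕ} (f : Setoid (Fin n) → ℝ) {A B : Setoid (Fin n)}
    (W : (hasse n).Walk A B) : walkWeight f W.reverse = walkWeight f W := by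
  simp [walkWeight, SimpleGraph.Walk.edges_reverse, List.sum_reverse]

/-- Down-walk along a maximal chain from `B` to any `A ≤ B`, of weight `f B - f A`. -/
lemma exists_walk_down {n : ℕ} (f : Setoid (Fin n) → ℝ) (hm : Monotone f) :
    ∀ B A : Setoid (Fin n), A ≤ B → ∃ W : (hasse n).Walk B A, walkWeight f W = f B - f A := by
  intro B
  induction B using WellFoundedLT.induction with
  | ind B ih =>
    intro A hAB
    rcases eq_or_lt_of_le hAB with rfl | hlt
    · exact ⟨SimpleGraph.Walk.nil, by simp [walkWeight]⟩
    · obtain ⟨C, hAC, hCB⟩ := exists_le_covBy_of_lt hlt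
      obtain ⟨W, hW⟩ := ih C hCB.lt A hAC
      refine ⟨SimpleGraph.Walk.cons (show (hasse n).Adj B C from Or.inr hCB) W, ?_⟩
      rw [walkWeight_cons, hW, eWeight_mk,
        abs_of_nonneg (sub_nonneg.2 (hm hCB.lt.le))]
      ring

/-- Any edge-Lipschitz potential `g` gives a lower bound on walk weights. -/
lemma walk_lower {n : ℕ} (f g : Setoid (Fin n) → ℝ)
    (hlip : ∀ A B : Setoid (Fin n), (hasse n).Adj A B → |g A - g B| ≤ eWeight f s(A, B)) :
    ∀ {P Q : Setoid (Fin n)} (W : (hasse n).Walk P Q), |g P - g Q| ≤ walkWeight f W := by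
  intro P Q W
  induction W with
  | nil => simp [walkWeight]
  | @cons A B C h W ih =>
    rw [walkWeight_cons]
    calc |g A - g C| ≤ |g A - g B| + |g B - g C| := abs_sub_le _ _ _
    _ ≤ _ := add_le_add (hlip _ _ h) ih

lemma lip_of_covBy {n : ℕ} (f g : Setoid (Fin n) → ℝ)
    (hc : ∀ A B : Setoid (Fin n), A ⋖ B → |g A - g B| ≤ eWeight f s(A, B)) :
    ∀ A B : Setoid (Fin n), (hasse n).Adj A B → |g A - g B| ≤ eWeight f s(A, B) := by
  intro A B h
  rcases h with h | h
  · exact hc A B h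
  · have h2 := hc B A h
    rw [eWeight_mk] at h2 ⊢
    rw [abs_sub_comm (g A), abs_sub_comm (f A)]
    exact h2

lemma deltaW_eq_of_potential {n : ℕ} (f g : Setoid (Fin n) → ℝ) (P Q : Setoid (Fin n))
    (hlip : ∀ A B : Setoid (Fin n), (hasse n).Adj A B → |g A - g B| ≤ eWeight f s(A, B))
    (W : (hasse n).Walk P Q) (hW : walkWeight f W = g P - g Q) :
    deltaW f P Q = g P - g Q := by
  have hlb : ∀ w ∈ {w : ℝ | ∃ W : (hasse n).Walk P Q, walkWeight f W = w}, g P - g Q ≤ w := by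
    rintro w ⟨W', rfl⟩
    exact (le_abs_self _).trans (walk_lower f g hlip W')
  exact le_antisymm (csInf_le ⟨_, hlb⟩ ⟨W, hW⟩) (le_csInf ⟨_, W, hW⟩ hlb)
/-- For a symmetric, strictly order-preserving partition function `f`:
if `f` is supermodular then `δ_f(P,Q) = f(P) + f(Q) - 2 f(P ⊓ Q)`;
if `f` is submodular then `δ_f(P,Q) = 2 f(P ⊔ Q) - f(P) - f(Q)`. -/
theorem deltaW_of_order_preserving (n : ℕ) (f : Setoid (Fin n) → ℝ)
    (hsymm : ∀ (π : Equiv.Perm (Fin n)) (P : Setoid (Fin n)), f (Setoid.comap π P) = f P)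
    (hmono : ∀ P Q : Setoid (Fin n), P < Q → f P < f Q) :
    ((∀ P Q : Setoid (Fin n), f P + f Q ≤ f (P ⊔ Q) + f (P ⊓ Q)) →
      ∀ P Q : Setoid (Fin n), deltaW f P Q = f P + f Q - 2 * f (P ⊓ Q)) ∧
    ((∀ P Q : Setoid (Fin n), f (P ⊔ Q) + f (P ⊓ Q) ≤ f P + f Q) →
      ∀ P Q : Setoid (Fin n), deltaW f P Q = 2 * f (P ⊔ Q) - f P - f Q) := by
  have hm : Monotone f := fun A B hle =>
    hle.lt_or_eq.elim (fun h' => (hmono _ _ h').le) (fun h' => h' ▸ le_rfl)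
  constructor
  · intro hsup P Q
    set g : Setoid (Fin n) → ℝ := fun R => f R - 2 * f (R ⊓ Q) with hg
    have hgPQ : g P - g Q = f P + f Q - 2 * f (P ⊓ Q) := by
      simp [hg, inf_idem]; ring
    have hlip : ∀ A B : Setoid (Fin n), (hasse n).Adj A B → |g A - g B| ≤ eWeight f s(A, B) := by
      refine lip_of_covBy f g ?_
      intro A B hcov
      have hAB : A ≤ B := hcov.lt.le
      have h1 : f (A ⊓ Q) ≤ f (B ⊓ Q) := hm (inf_le_inf_right Q hAB)
      have h2 : f A + f (B ⊓ Q) ≤ f B + f (A ⊓ Q) := by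
        have := hsup A (B ⊓ Q)
        have e1 : A ⊓ (B ⊓ Q) = A ⊓ Q := by rw [← inf_assoc, inf_eq_left.mpr hAB]
        have e2 : f (A ⊔ B ⊓ Q) ≤ f B := hm (sup_le hAB inf_le_left)
        rw [e1] at this
        linarith
      have hfAB : f A ≤ f B := hm hAB
      rw [eWeight_mk, abs_sub_comm (f A), abs_of_nonneg (sub_nonneg.2 hfAB)]
      rw [abs_le]
      constructor <;> simp only [hg] <;> linarith
    obtain ⟨W₁, hW₁⟩ := exists_walk_down f hm P (P ⊓ Q) inf_le_left
    obtain ⟨W₂, hW₂⟩ := exists_walk_down f hm Q (P ⊓ Q) inf_le_right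
    have hW : walkWeight f (W₁.append W₂.reverse) = g P - g Q := by
      rw [walkWeight_append, walkWeight_reverse, hW₁, hW₂, hgPQ]; ring
    rw [deltaW_eq_of_potential f g P Q hlip _ hW, hgPQ]
  · intro hsub P Q
    set g : Setoid (Fin n) → ℝ := fun R => 2 * f (R ⊔ Q) - f R with hg
    have hgPQ : g P - g Q = 2 * f (P ⊔ Q) - f P - f Q := by
      simp [hg, sup_idem]; ring
    have hlip : ∀ A B : Setoid (Fin n), (hasse n).Adj A B → |g A - g B| ≤ eWeight f s(A, B) := by
      refine lip_of_covBy f g ?_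
      intro A B hcov
      have hAB : A ≤ B := hcov.lt.le
      have h1 : f (A ⊔ Q) ≤ f (B ⊔ Q) := hm (sup_le_sup_right hAB Q)
      have h2 : f (B ⊔ Q) + f A ≤ f B + f (A ⊔ Q) := by
        have := hsub B (A ⊔ Q)
        have e1 : B ⊔ (A ⊔ Q) = B ⊔ Q := by rw [← sup_assoc, sup_eq_left.mpr hAB]
        have e2 : f A ≤ f (B ⊓ (A ⊔ Q)) := hm (le_inf hAB le_sup_left)
        rw [e1] at this
        linarith
      have hfAB : f A ≤ f B := hm hAB
      rw [eWeight_mk, abs_sub_comm (f A), abs_of_nonneg (sub_nonneg.2 hfAB)]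
      rw [abs_le]
      constructor <;> simp only [hg] <;> linarith
    obtain ⟨W₁, hW₁⟩ := exists_walk_down f hm (P ⊔ Q) P le_sup_left
    obtain ⟨W₂, hW₂⟩ := exists_walk_down f hm (P ⊔ Q) Q le_sup_right
    have hW : walkWeight f (W₁.reverse.append W₂) = g P - g Q := by
      rw [walkWeight_append, walkWeight_reverse, hW₁, hW₂, hgPQ]; ring
    rw [deltaW_eq_of_potential f g P Q hlip _ hW, hgPQ]
end

section
/- Let f be a symmetric, strictly order-inverting partition function on Setoid (Fin n). If f is supermodular, then the minimum-f-weight partition distance is δ_f(P,Q) = f(P) + f(Q) − 2·f(P ⊔ Q) for all partitions P, Q; if instead f is submodular, then δ_f(P,Q) = 2·f(P ⊓ Q) − f(P) − f(Q) for all partitions P, Q. -/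
open scoped BigOperators

instance mySetoidFinite (n : ℕ) : Finite (Setoid (Fin n)) :=
  Finite.of_injective (fun s : Setoid (Fin n) => s.r)
    (fun a b h => by cases a; cases b; simp_all)

@[simp] lemma my_walkWeight_nil {n : ℕ} (f : Setoid (Fin n) → ℝ) {P : Setoid (Fin n)} :
    walkWeight f (SimpleGraph.Walk.nil : (hasse n).Walk P P) = 0 := rfl

@[simp] lemma my_walkWeight_cons {n : ℕ} (f : Setoid (Fin n) → ℝ) {P Q R : Setoid (Fin n)}
    (h : (hasse n).Adj P Q) (W : (hasse n).Walk Q R) :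
    walkWeight f (SimpleGraph.Walk.cons h W) = |f P - f Q| + walkWeight f W := by
  simp [walkWeight, eWeight]

@[simp] lemma my_walkWeight_append {n : ℕ} (f : Setoid (Fin n) → ℝ) {P Q R : Setoid (Fin n)}
    (W : (hasse n).Walk P Q) (W' : (hasse n).Walk Q R) :
    walkWeight f (W.append W') = walkWeight f W + walkWeight f W' := by
  simp [walkWeight, SimpleGraph.Walk.edges_append]

@[simp] lemma my_walkWeight_reverse {n : ℕ} (f : Setoid (Fin n) → ℝ) {P Q : Setoid (Fin n)}
    (W : (hasse n).Walk P Q) :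
    walkWeight f W.reverse = walkWeight f W := by
  simp [walkWeight, SimpleGraph.Walk.edges_reverse, List.sum_reverse]

/-- An upward covering chain from `P` to `R` whose weight telescopes. -/
lemma my_exists_walk_up {n : ℕ} (f : Setoid (Fin n) → ℝ)
    (hanti : ∀ P Q : Setoid (Fin n), P < Q → f Q < f P) :
    ∀ P R : Setoid (Fin n), P ≤ R →
      ∃ W : (hasse n).Walk P R, walkWeight f W = f P - f R := by
  have hwf : WellFounded ((· > ·) : Setoid (Fin n) → Setoid (Fin n) → Prop) := wellFounded_gt
  intro P
  induction P using hwf.induction with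
  | _ P ih =>
    intro R hPR
    rcases eq_or_lt_of_le hPR with rfl | hlt
    · exact ⟨SimpleGraph.Walk.nil, by simp⟩
    · obtain ⟨S, hPS, hSR⟩ := hlt.exists_covby_le
      obtain ⟨W, hW⟩ := ih S hPS.lt R hSR
      refine ⟨SimpleGraph.Walk.cons (show (hasse n).Adj P S from Or.inl hPS) W, ?_⟩
      rw [my_walkWeight_cons, hW, abs_of_pos (sub_pos.2 (hanti _ _ hPS.lt))]
      ring

lemma my_deltaW_eq {n : ℕ} (f : Setoid (Fin n) → ℝ)
    (d : Setoid (Fin n) → Setoid (Fin n) → ℝ)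
    (h0 : ∀ P, d P P = 0)
    (htri : ∀ P Q R, d P R ≤ d P Q + d Q R)
    (hedge : ∀ P Q, (hasse n).Adj P Q → d P Q ≤ |f P - f Q|)
    (hwit : ∀ P Q, ∃ W : (hasse n).Walk P Q, walkWeight f W = d P Q)
    (P Q : Setoid (Fin n)) : deltaW f P Q = d P Q := by
  have hlb : ∀ (X : Setoid (Fin n)) (W : (hasse n).Walk X Q), d X Q ≤ walkWeight f W := by
    intro X W
    induction W with
    | nil => simp [h0]
    | cons h W ih =>
      rw [my_walkWeight_cons]
      exact le_trans (htri _ _ _) (add_le_add (hedge _ _ h) ih)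
  obtain ⟨W, hW⟩ := hwit P Q
  refine le_antisymm (csInf_le ⟨d P Q, ?_⟩ ⟨W, hW⟩) (le_csInf ⟨_, W, hW⟩ ?_) <;>
    · rintro w ⟨W', rfl⟩; exact hlb P W'

/-- For a symmetric, strictly order-inverting partition function `f`:
if `f` is supermodular then `δ_f(P,Q) = f(P) + f(Q) - 2 f(P ⊔ Q)`;
if `f` is submodular then `δ_f(P,Q) = 2 f(P ⊓ Q) - f(P) - f(Q)`. -/
theorem deltaW_of_order_inverting (n : ℕ) (f : Setoid (Fin n) → ℝ)
    (hsymm : ∀ (π : Equiv.Perm (Fin n)) (P : Setoid (Fin n)), f (Setoid.comap π P) = f P)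
    (hanti : ∀ P Q : Setoid (Fin n), P < Q → f Q < f P) :
    ((∀ P Q : Setoid (Fin n), f P + f Q ≤ f (P ⊔ Q) + f (P ⊓ Q)) →
      ∀ P Q : Setoid (Fin n), deltaW f P Q = f P + f Q - 2 * f (P ⊔ Q)) ∧
    ((∀ P Q : Setoid (Fin n), f (P ⊔ Q) + f (P ⊓ Q) ≤ f P + f Q) →
      ∀ P Q : Setoid (Fin n), deltaW f P Q = 2 * f (P ⊓ Q) - f P - f Q) := by
  have hle : ∀ {A B : Setoid (Fin n)}, A ≤ B → f B ≤ f A := by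
    intro A B h
    rcases h.lt_or_eq with h' | rfl
    · exact (hanti _ _ h').le
    · exact le_rfl
  constructor
  · intro hsuper P Q
    refine my_deltaW_eq f (fun P Q => f P + f Q - 2 * f (P ⊔ Q)) ?_ ?_ ?_ ?_ P Q
    · intro P; simp; ring
    · intro P Q R
      have h1 := hsuper (P ⊔ Q) (Q ⊔ R)
      have h2 : f (P ⊔ Q ⊔ (Q ⊔ R)) ≤ f (P ⊔ R) :=
        hle (sup_le (le_sup_left.trans le_sup_left) (le_sup_right.trans le_sup_right))
      have h3 : f ((P ⊔ Q) ⊓ (Q ⊔ R)) ≤ f Q := hle (le_inf le_sup_right le_sup_left)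
      linarith
    · rintro P Q (h | h)
      · rw [sup_eq_right.2 h.lt.le, abs_of_pos (sub_pos.2 (hanti _ _ h.lt))]; linarith
      · rw [sup_eq_left.2 h.lt.le, abs_of_neg (sub_neg.2 (hanti _ _ h.lt))]; linarith
    · intro P Q
      obtain ⟨W1, hW1⟩ := my_exists_walk_up f hanti P (P ⊔ Q) le_sup_left
      obtain ⟨W2, hW2⟩ := my_exists_walk_up f hanti Q (P ⊔ Q) le_sup_right
      exact ⟨W1.append W2.reverse, by simp [hW1, hW2]; ring⟩
  · intro hsub P Q
    refine my_deltaW_eq f (fun P Q => 2 * f (P ⊓ Q) - f P - f Q) ?_ ?_ ?_ ?_ P Q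
    · intro P; simp; ring
    · intro P Q R
      have h1 := hsub (P ⊓ Q) (Q ⊓ R)
      have h2 : f (P ⊓ R) ≤ f (P ⊓ Q ⊓ (Q ⊓ R)) :=
        hle (le_inf (inf_le_left.trans inf_le_left) (inf_le_right.trans inf_le_right))
      have h3 : f Q ≤ f (P ⊓ Q ⊔ Q ⊓ R) := hle (sup_le inf_le_right inf_le_left)
      linarith
    · rintro P Q (h | h)
      · rw [inf_eq_left.2 h.lt.le, abs_of_pos (sub_pos.2 (hanti _ _ h.lt))]; linarith
      · rw [inf_eq_right.2 h.lt.le, abs_of_neg (sub_neg.2 (hanti _ _ h.lt))]; linarith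
    · intro P Q
      obtain ⟨W1, hW1⟩ := my_exists_walk_up f hanti (P ⊓ Q) P inf_le_left
      obtain ⟨W2, hW2⟩ := my_exists_walk_up f hanti (P ⊓ Q) Q inf_le_right
      exact ⟨W1.reverse.append W2, by simp [hW1, hW2]; ring⟩
end

section
/- The Hamming distance between partitions is the minimum-size-weight partition distance: for all partitions P, Q of Fin n, δ_s(P,Q) = HD(P,Q) = s(P) + s(Q) − 2·s(P ⊓ Q), where δ_s is the minimum-weight walk distance in the Hasse-diagram graph with edge weights given by differences of the size s. -/
open scoped BigOperators
open scoped symmDiff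
set_option linter.deprecated false

section Aux

open scoped symmDiff
set_option linter.deprecated false

variable {n : ℕ}

noncomputable def pairs (n : ℕ) (R : Setoid (Fin n)) : Finset (Fin n × Fin n) :=
  (Set.toFinite {p : Fin n × Fin n | p.1 < p.2 ∧ R.r p.1 p.2}).toFinset

lemma mem_pairs {R : Setoid (Fin n)} {p : Fin n × Fin n} :
    p ∈ pairs n R ↔ p.1 < p.2 ∧ R.r p.1 p.2 := (Set.toFinite _).mem_toFinset

lemma partSize_eq (R : Setoid (Fin n)) : partSize n R = (pairs n R).card := by
  rw [partSize, ← Set.ncard_coe_finset]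
  congr 1
  exact ((Set.toFinite _).coe_toFinset).symm

lemma pairs_mono {R R' : Setoid (Fin n)} (h : R ≤ R') : pairs n R ⊆ pairs n R' := by
  intro p hp
  rw [mem_pairs] at hp ⊢
  exact ⟨hp.1, h hp.2⟩

lemma pairs_ssubset {R R' : Setoid (Fin n)} (h : R < R') : pairs n R ⊂ pairs n R' := by
  refine ⟨pairs_mono h.le, fun hsub => h.not_ge fun x y hxy => ?_⟩
  rcases lt_trichotomy x y with hlt | rfl | hlt
  · exact (mem_pairs.mp (hsub (mem_pairs.mpr ⟨hlt, hxy⟩ : (x, y) ∈ pairs n R'))).2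
  · exact R.refl' x
  · exact R.symm' (mem_pairs.mp (hsub (mem_pairs.mpr ⟨hlt, R'.symm' hxy⟩ :
      (y, x) ∈ pairs n R'))).2

lemma pairs_inf (P Q : Setoid (Fin n)) : pairs n (P ⊓ Q) = pairs n P ∩ pairs n Q := by
  ext p
  simp only [Finset.mem_inter, mem_pairs]
  constructor
  · rintro ⟨h1, h2, h3⟩; exact ⟨⟨h1, h2⟩, ⟨h1, h3⟩⟩
  · rintro ⟨⟨h1, h2⟩, ⟨-, h3⟩⟩; exact ⟨h1, h2, h3⟩

lemma edge_weight_eq {R R' : Setoid (Fin n)} (h : (hasse n).Adj R R') :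
    |(partSize n R : ℝ) - partSize n R'| = ((pairs n R ∆ pairs n R').card : ℝ) := by
  have key : ∀ A B : Setoid (Fin n), A ≤ B →
      |(partSize n A : ℝ) - partSize n B| = ((pairs n A ∆ pairs n B).card : ℝ) := by
    intro A B hAB
    have hsub := pairs_mono (n := n) hAB
    have hd : pairs n A ∆ pairs n B = pairs n B \ pairs n A := by
      rw [symmDiff_def, Finset.sdiff_eq_empty_iff_subset.mpr hsub]
      simp
    rw [hd, Finset.card_sdiff_of_subset hsub, partSize_eq, partSize_eq]
    rw [Nat.cast_sub (Finset.card_le_card hsub)]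
    rw [abs_sub_comm, abs_of_nonneg]
    have := Finset.card_le_card hsub
    exact sub_nonneg.mpr (by exact_mod_cast this)
  rcases h with h | h
  · exact key _ _ h.le
  · rw [abs_sub_comm, symmDiff_comm]; exact key _ _ h.le

lemma card_symmDiff_real (A B : Finset (Fin n × Fin n)) :
    ((A ∆ B).card : ℝ) = (A.card : ℝ) + B.card - 2 * (A ∩ B).card := by
  have hdis : Disjoint (A \ B) (B \ A) := disjoint_sdiff_sdiff
  have h3 : (A ∆ B).card = (A \ B).card + (B \ A).card := by
    rw [symmDiff_def, Finset.sup_eq_union, Finset.card_union_of_disjoint hdis]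
  have h5 := Finset.card_inter_add_card_sdiff A B
  have h6 := Finset.card_inter_add_card_sdiff B A
  have h7 : (B ∩ A).card = (A ∩ B).card := by rw [Finset.inter_comm]
  have hN : (A ∆ B).card + 2 * (A ∩ B).card = A.card + B.card := by omega
  have := congrArg (fun m : ℕ => (m : ℝ)) hN
  push_cast at this
  linarith

lemma walk_lower_bound {A B : Setoid (Fin n)} (W : (hasse n).Walk A B) :
    ((pairs n A ∆ pairs n B).card : ℝ) ≤
      walkWeight (fun R => (partSize n R : ℝ)) W := by
  induction W with
  | nil => simp [walkWeight]
  | @cons u v w h p ih =>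
    have hW : walkWeight (fun R => (partSize n R : ℝ)) (SimpleGraph.Walk.cons h p)
        = |(partSize n u : ℝ) - partSize n v|
          + walkWeight (fun R => (partSize n R : ℝ)) p := by
      simp [walkWeight, eWeight]
    rw [hW, edge_weight_eq h]
    have htri : (pairs n u ∆ pairs n w).card ≤
        (pairs n u ∆ pairs n v).card + (pairs n v ∆ pairs n w).card := by
      calc (pairs n u ∆ pairs n w).card
          ≤ ((pairs n u ∆ pairs n v) ∪ (pairs n v ∆ pairs n w)).card :=
            Finset.card_le_card (symmDiff_triangle _ _ _)
        _ ≤ _ := Finset.card_union_le _ _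
    have htri' : ((pairs n u ∆ pairs n w).card : ℝ) ≤
        ((pairs n u ∆ pairs n v).card : ℝ) + ((pairs n v ∆ pairs n w).card : ℝ) := by
      exact_mod_cast htri
    linarith [ih]

lemma chain_walk : ∀ k : ℕ, ∀ R R' : Setoid (Fin n), R ≤ R' →
    (pairs n R').card - (pairs n R).card ≤ k →
    ∃ W : (hasse n).Walk R R',
      walkWeight (fun S => (partSize n S : ℝ)) W = (partSize n R' : ℝ) - partSize n R := by
  haveI : Finite (Setoid (Fin n)) :=
    Finite.of_injective (fun R : Setoid (Fin n) => ⇑R)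
      (fun a b h => Setoid.eq_iff_rel_eq.mpr h)
  haveI : Fintype (Setoid (Fin n)) := Fintype.ofFinite _
  haveI : @DecidableRel (Setoid (Fin n)) (Setoid (Fin n)) (· < ·) := Classical.decRel _
  haveI : @DecidableRel (Setoid (Fin n)) (Setoid (Fin n)) (· ≤ ·) := Classical.decRel _
  haveI := Fintype.toLocallyFiniteOrder (α := Setoid (Fin n))
  intro k
  induction k with
  | zero =>
    intro R R' hle hcard
    rcases eq_or_lt_of_le hle with rfl | hlt
    · exact ⟨SimpleGraph.Walk.nil, by simp [walkWeight]⟩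
    · exfalso
      have := Finset.card_lt_card (pairs_ssubset hlt)
      omega
  | succ k ih =>
    intro R R' hle hcard
    rcases eq_or_lt_of_le hle with rfl | hlt
    · exact ⟨SimpleGraph.Walk.nil, by simp [walkWeight]⟩
    · obtain ⟨M, hcov, hMle⟩ := exists_covBy_le_of_lt hlt
      have hcardRM := Finset.card_lt_card (pairs_ssubset hcov.lt)
      have hcardMR' := Finset.card_le_card (pairs_mono hMle)
      obtain ⟨W', hW'⟩ := ih M R' hMle (by omega)
      refine ⟨SimpleGraph.Walk.cons (Or.inl hcov : (hasse n).Adj R M) W', ?_⟩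
      have : walkWeight (fun S => (partSize n S : ℝ)) (SimpleGraph.Walk.cons (Or.inl hcov : (hasse n).Adj R M) W')
          = |(partSize n R : ℝ) - partSize n M|
            + walkWeight (fun S => (partSize n S : ℝ)) W' := by
        rfl
      rw [this, hW']
      have hsM : (partSize n R : ℝ) ≤ partSize n M := by
        rw [partSize_eq, partSize_eq]; exact_mod_cast hcardRM.le
      rw [abs_sub_comm, abs_of_nonneg (sub_nonneg.mpr hsM)]
      ring

end Aux

/-- The Hamming distance is the minimum-size-weight partition distance:
`δ_s(P,Q) = HD(P,Q) = s(P) + s(Q) - 2 s(P ⊓ Q)`. -/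
theorem deltaW_size_eq_HD (n : ℕ) (P Q : Setoid (Fin n)) :
    deltaW (fun R => (partSize n R : ℝ)) P Q = (HD n P Q : ℝ) ∧
    (HD n P Q : ℝ) =
      (partSize n P : ℝ) + (partSize n Q : ℝ) - 2 * (partSize n (P ⊓ Q) : ℝ) := by
  have hHD : (HD n P Q : ℝ) =
      (partSize n P : ℝ) + (partSize n Q : ℝ) - 2 * (partSize n (P ⊓ Q) : ℝ) := by
    push_cast [HD]
    ring
  refine ⟨?_, hHD⟩
  set f : Setoid (Fin n) → ℝ := fun R => (partSize n R : ℝ) with hf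
  set S : Set ℝ := {w : ℝ | ∃ W : (hasse n).Walk P Q, walkWeight f W = w} with hS
  have hHDcard : (HD n P Q : ℝ) = ((pairs n P ∆ pairs n Q).card : ℝ) := by
    rw [hHD, card_symmDiff_real, ← pairs_inf]
    simp only [partSize_eq]
  -- membership
  obtain ⟨W1, hW1⟩ := chain_walk (pairs n P).card (P ⊓ Q) P inf_le_left (Nat.sub_le _ _)
  obtain ⟨W2, hW2⟩ := chain_walk (pairs n Q).card (P ⊓ Q) Q inf_le_right (Nat.sub_le _ _)
  have hmem : (HD n P Q : ℝ) ∈ S := by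
    refine ⟨W1.reverse.append W2, ?_⟩
    have hrev : walkWeight f W1.reverse = walkWeight f W1 := by
      simp [walkWeight, SimpleGraph.Walk.edges_reverse, List.sum_reverse]
    have happ : walkWeight f (W1.reverse.append W2)
        = walkWeight f W1.reverse + walkWeight f W2 := by
      simp [walkWeight, SimpleGraph.Walk.edges_append]
    rw [happ, hrev, hW1, hW2, hHD]
    ring
  have hlb : ∀ w ∈ S, (HD n P Q : ℝ) ≤ w := by
    rintro w ⟨W, rfl⟩
    rw [hHDcard]
    exact walk_lower_bound W
  exact le_antisymm (csInf_le ⟨_, hlb⟩ hmem) (le_csInf ⟨_, hmem⟩ hlb)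
end

section
/- The variation of information is the minimum-entropy-weight partition distance: for all partitions P, Q of Fin n (n ≥ 1), δ_e(P,Q) = VI(P,Q) = 2·e(P ⊓ Q) − e(P) − e(Q), where δ_e is the minimum-weight walk distance in the Hasse-diagram graph with edge weights given by differences of the entropy e. -/
open scoped BigOperators

/-- Entropy of a partition (binary logarithm):
`e(P) = -∑_{A block of P} (|A|/n) · log₂(|A|/n)`. -/
noncomputable def entropy (n : ℕ) (P : Setoid (Fin n)) : ℝ :=
  - ∑ᶠ A ∈ P.classes, ((A.ncard : ℝ) / n) * Real.logb 2 ((A.ncard : ℝ) / n)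

/-- Variation of information: `VI(P,Q) = 2 e(P ⊓ Q) - e(P) - e(Q)`. -/
noncomputable def VI (n : ℕ) (P Q : Setoid (Fin n)) : ℝ :=
  2 * entropy n (P ⊓ Q) - entropy n P - entropy n Q

open Classical Finset

variable {n : ℕ}

noncomputable def cnt {n : ℕ} (P : Setoid (Fin n)) (x : Fin n) : ℕ :=
  {y | P y x}.ncard

lemma class_eq {n : ℕ} (P : Setoid (Fin n)) {A : Set (Fin n)} (hA : A ∈ P.classes)
    {x : Fin n} (hx : x ∈ A) : {y | P y x} = A := by
  obtain ⟨y, rfl⟩ := hA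
  ext z
  exact ⟨fun hz => P.trans hz hx, fun hz => P.trans hz (P.symm hx)⟩

lemma entropy_eq (n : ℕ) (P : Setoid (Fin n)) :
    entropy n P = - ∑ x : Fin n, (1 / (n:ℝ)) * Real.logb 2 ((cnt P x : ℝ) / n) := by
  classical
  have hfin : P.classes.Finite := Set.toFinite _
  rw [entropy, finsum_mem_eq_finite_toFinset_sum _ hfin]
  congr 1
  have hmaps : ∀ x : Fin n, x ∈ Finset.univ → {y | P y x} ∈ hfin.toFinset := fun x _ =>
    hfin.mem_toFinset.mpr (P.mem_classes x)
  rw [← Finset.sum_fiberwise_of_maps_to hmaps (fun x => (1 / (n:ℝ)) * Real.logb 2 ((cnt P x : ℝ) / n))]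
  apply Finset.sum_congr rfl
  intro A hA
  symm
  have hA' : A ∈ P.classes := hfin.mem_toFinset.mp hA
  have hfib : Finset.univ.filter (fun x => {y | P y x} = A) = A.toFinset := by
    ext x
    simp only [Finset.mem_filter, Finset.mem_univ, true_and, Set.mem_toFinset]
    exact ⟨fun h => h ▸ P.refl x, fun hx => class_eq P hA' hx⟩
  have hcard : A.ncard = A.toFinset.card := Set.ncard_eq_toFinset_card' A
  calc ∑ x ∈ Finset.univ.filter (fun x => {y | P y x} = A),
        (1 / (n:ℝ)) * Real.logb 2 ((cnt P x : ℝ) / n)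
      = ∑ _x ∈ A.toFinset, (1 / (n:ℝ)) * Real.logb 2 ((A.ncard : ℝ) / n) := by
        rw [hfib]; exact Finset.sum_congr rfl fun x hx => by
          rw [cnt, class_eq P hA' (Set.mem_toFinset.mp hx)]
    _ = ((A.ncard : ℝ) / n) * Real.logb 2 ((A.ncard : ℝ) / n) := by
        rw [Finset.sum_const, nsmul_eq_mul, ← hcard]; ring



lemma cnt_pos (P : Setoid (Fin n)) (x : Fin n) : 0 < cnt P x := by
  rw [cnt, Set.ncard_pos (Set.toFinite _)]
  exact ⟨x, P.refl x⟩

lemma cnt_pos' (P : Setoid (Fin n)) (x : Fin n) : (0:ℝ) < (cnt P x : ℝ) := by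
  exact_mod_cast cnt_pos P x

lemma cnt_congr (P : Setoid (Fin n)) {x y : Fin n} (h : P x y) : cnt P x = cnt P y := by
  unfold cnt; congr 1; ext z
  exact ⟨fun hz => P.trans hz h, fun hz => P.trans hz (P.symm h)⟩

lemma cnt_eq_sum (P : Setoid (Fin n)) (x : Fin n) :
    (cnt P x : ℝ) = ∑ y : Fin n, (if P y x then (1:ℝ) else 0) := by
  rw [Finset.sum_boole, cnt, Set.ncard_eq_toFinset_card', Set.toFinset_setOf]

section counting
variable (Q S T : Setoid (Fin n))

lemma step_a (hST : S ≤ T) (y z : Fin n) :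
    ∑ x : Fin n, (if Q x y ∧ T x y ∧ S z x then (1:ℝ) else 0) / (cnt (Q ⊓ S) x : ℝ)
      ≤ (if T z y then (1:ℝ) else 0) := by
  by_cases hw : ∃ x₀, Q x₀ y ∧ T x₀ y ∧ S z x₀
  · obtain ⟨x₀, hq0, ht0, hs0⟩ := hw
    have hTzy : T z y := T.trans (hST hs0) ht0
    rw [if_pos hTzy]
    set F := Finset.univ.filter (fun x => Q x y ∧ T x y ∧ S z x) with hF
    have hx₀F : x₀ ∈ F := by simp [hF, hq0, ht0, hs0]
    have hcard : ∀ x ∈ F, (cnt (Q ⊓ S) x : ℝ) = (F.card : ℝ) := by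
      intro x hx
      simp only [hF, Finset.mem_filter, Finset.mem_univ, true_and] at hx
      obtain ⟨hq', ht', hs'⟩ := hx
      have hset : {u | (Q ⊓ S) u x} = (F : Set (Fin n)) := by
        ext u
        simp only [Set.mem_setOf_eq, Setoid.inf_iff_and, hF, Finset.coe_filter,
          Finset.mem_univ, true_and, Set.mem_setOf_eq]
        constructor
        · rintro ⟨hqu, hsu⟩
          exact ⟨Q.trans hqu hq', T.trans (hST hsu) ht', S.trans hs' (S.symm hsu)⟩
        · rintro ⟨hqu, _, hsu⟩
          exact ⟨Q.trans hqu (Q.symm hq'), S.trans (S.symm hsu) hs'⟩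
      rw [cnt, hset, Set.ncard_coe_finset]
    have hne : (F.card : ℝ) ≠ 0 := by
      have : 0 < F.card := Finset.card_pos.mpr ⟨x₀, hx₀F⟩
      positivity
    have : ∑ x : Fin n, (if Q x y ∧ T x y ∧ S z x then (1:ℝ) else 0) / (cnt (Q ⊓ S) x : ℝ)
        = ∑ x ∈ F, 1 / (cnt (Q ⊓ S) x : ℝ) := by
      rw [Finset.sum_filter]
      exact Finset.sum_congr rfl fun x _ => by split_ifs <;> simp
    rw [this, Finset.sum_congr rfl (fun x hx => by rw [hcard x hx]), Finset.sum_const,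
      nsmul_eq_mul]
    rw [mul_one_div, div_self hne]
  · push_neg at hw
    have : ∀ x : Fin n, (if Q x y ∧ T x y ∧ S z x then (1:ℝ) else 0) / (cnt (Q ⊓ S) x : ℝ) = 0 := by
      intro x
      rw [if_neg, zero_div]
      rintro ⟨h1, h2, h3⟩
      exact hw x h1 h2 h3
    rw [Finset.sum_congr rfl fun x _ => this x, Finset.sum_const, smul_zero]
    split_ifs <;> norm_num

lemma step_b (hST : S ≤ T) (y : Fin n) :
    ∑ x : Fin n, (if Q x y ∧ T x y then (1:ℝ) else 0) *
      ((cnt S x : ℝ) / ((cnt T x : ℝ) * (cnt (Q ⊓ S) x : ℝ))) ≤ 1 := by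
  have hTy := cnt_pos' T y
  have h1 : ∀ x : Fin n, (if Q x y ∧ T x y then (1:ℝ) else 0) *
      ((cnt S x : ℝ) / ((cnt T x : ℝ) * (cnt (Q ⊓ S) x : ℝ)))
      = ∑ z : Fin n, (1 / (cnt T y : ℝ)) *
        ((if Q x y ∧ T x y ∧ S z x then (1:ℝ) else 0) / (cnt (Q ⊓ S) x : ℝ)) := by
    intro x
    by_cases hc : Q x y ∧ T x y
    · have hTx : (cnt T x : ℝ) = (cnt T y : ℝ) := Nat.cast_inj.mpr (cnt_congr T hc.2)
      rw [if_pos hc, one_mul, hTx]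
      rw [cnt_eq_sum S x, Finset.sum_div]
      apply Finset.sum_congr rfl
      intro z _
      by_cases hs : S z x
      · rw [if_pos hs, if_pos ⟨hc.1, hc.2, hs⟩]
        field_simp
      · rw [if_neg hs, if_neg (fun h => hs h.2.2)]
        simp
    · rw [if_neg hc, zero_mul]
      rw [Finset.sum_congr rfl (fun z _ => by
        rw [if_neg (fun h => hc ⟨h.1, h.2.1⟩), zero_div, mul_zero])]
      simp
  rw [Finset.sum_congr rfl fun x _ => h1 x, Finset.sum_comm]
  have h2 : ∀ z : Fin n, ∑ x : Fin n, (1 / (cnt T y : ℝ)) *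
      ((if Q x y ∧ T x y ∧ S z x then (1:ℝ) else 0) / (cnt (Q ⊓ S) x : ℝ))
      ≤ (1 / (cnt T y : ℝ)) * (if T z y then (1:ℝ) else 0) := by
    intro z
    rw [← Finset.mul_sum]
    exact mul_le_mul_of_nonneg_left (step_a Q S T hST y z) (by positivity)
  calc ∑ z : Fin n, ∑ x : Fin n, (1 / (cnt T y : ℝ)) *
        ((if Q x y ∧ T x y ∧ S z x then (1:ℝ) else 0) / (cnt (Q ⊓ S) x : ℝ))
      ≤ ∑ z : Fin n, (1 / (cnt T y : ℝ)) * (if T z y then (1:ℝ) else 0) :=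
        Finset.sum_le_sum fun z _ => h2 z
    _ = (1 / (cnt T y : ℝ)) * (cnt T y : ℝ) := by rw [← Finset.mul_sum, ← cnt_eq_sum]
    _ = 1 := by field_simp

lemma counting (hST : S ≤ T) :
    ∑ x : Fin n, (cnt (Q ⊓ T) x : ℝ) * (cnt S x : ℝ) /
      ((cnt T x : ℝ) * (cnt (Q ⊓ S) x : ℝ)) ≤ (n : ℝ) := by
  have h1 : ∀ x : Fin n, (cnt (Q ⊓ T) x : ℝ) * (cnt S x : ℝ) /
      ((cnt T x : ℝ) * (cnt (Q ⊓ S) x : ℝ))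
      = ∑ y : Fin n, (if Q x y ∧ T x y then (1:ℝ) else 0) *
        ((cnt S x : ℝ) / ((cnt T x : ℝ) * (cnt (Q ⊓ S) x : ℝ))) := by
    intro x
    rw [mul_div_assoc, cnt_eq_sum (Q ⊓ T) x, Finset.sum_mul]
    apply Finset.sum_congr rfl
    intro y _
    rw [show ((Q ⊓ T) y x) = (Q x y ∧ T x y) from propext (Setoid.inf_iff_and.trans
      ⟨fun ⟨a, b⟩ => ⟨Q.symm a, T.symm b⟩, fun ⟨a, b⟩ => ⟨Q.symm a, T.symm b⟩⟩)]
    simp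
  rw [Finset.sum_congr rfl fun x _ => h1 x, Finset.sum_comm]
  calc ∑ y : Fin n, ∑ x : Fin n, (if Q x y ∧ T x y then (1:ℝ) else 0) *
        ((cnt S x : ℝ) / ((cnt T x : ℝ) * (cnt (Q ⊓ S) x : ℝ)))
      ≤ ∑ _y : Fin n, (1:ℝ) := Finset.sum_le_sum fun y _ => step_b Q S T hST y
    _ = (n : ℝ) := by simp

end counting

lemma sum_log_le (hn : 1 ≤ n) (w : Fin n → ℝ) (hw : ∀ x, 0 < w x)
    (hs : ∑ x : Fin n, w x ≤ (n : ℝ)) :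
    ∑ x : Fin n, (1 / (n:ℝ)) * Real.log (w x) ≤ 0 := by
  have hn' : (0:ℝ) < n := by exact_mod_cast hn
  have h1 : ∑ _x : Fin n, (1/(n:ℝ)) = 1 := by
    rw [Finset.sum_const, Finset.card_univ, Fintype.card_fin, nsmul_eq_mul]
    field_simp
  have hj := (strictConcaveOn_log_Ioi.concaveOn).le_map_sum
    (t := Finset.univ) (w := fun _ : Fin n => 1/(n:ℝ)) (p := w)
    (fun i _ => by positivity) h1 (fun i _ => hw i)
  simp only [smul_eq_mul] at hj
  have h2 : Real.log (∑ x : Fin n, (1/(n:ℝ)) * w x) ≤ 0 := by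
    apply Real.log_nonpos
    · exact Finset.sum_nonneg fun x _ => by have := hw x; positivity
    · rw [← Finset.mul_sum]
      rw [div_mul_eq_mul_div, one_mul, div_le_one hn']
      exact hs
  exact hj.trans h2

lemma cond_le (hn : 1 ≤ n) (Q S T : Setoid (Fin n)) (hST : S ≤ T) :
    entropy n (Q ⊓ S) - entropy n S ≤ entropy n (Q ⊓ T) - entropy n T := by
  have hn' : (0:ℝ) < n := by exact_mod_cast hn
  set w : Fin n → ℝ := fun x =>
    (cnt (Q ⊓ T) x : ℝ) * (cnt S x : ℝ) / ((cnt T x : ℝ) * (cnt (Q ⊓ S) x : ℝ)) with hw_def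
  have hw : ∀ x, 0 < w x := fun x => by
    have h1 := cnt_pos' (Q ⊓ T) x; have h2 := cnt_pos' S x
    have h3 := cnt_pos' T x; have h4 := cnt_pos' (Q ⊓ S) x
    positivity
  have key : ∑ x : Fin n, (1/(n:ℝ)) * Real.logb 2 (w x) ≤ 0 := by
    have : ∀ x : Fin n, (1/(n:ℝ)) * Real.logb 2 (w x)
        = ((1/(n:ℝ)) * Real.log (w x)) / Real.log 2 := by
      intro x; rw [Real.logb]; ring
    rw [Finset.sum_congr rfl fun x _ => this x, ← Finset.sum_div]
    apply div_nonpos_of_nonpos_of_nonneg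
    · exact sum_log_le hn w hw (counting Q S T hST)
    · exact (Real.log_pos one_lt_two).le
  have hx : ∀ x : Fin n,
      (1/(n:ℝ)) * Real.logb 2 ((cnt T x : ℝ)/n) - (1/(n:ℝ)) * Real.logb 2 ((cnt (Q ⊓ T) x : ℝ)/n)
      - ((1/(n:ℝ)) * Real.logb 2 ((cnt S x : ℝ)/n)
         - (1/(n:ℝ)) * Real.logb 2 ((cnt (Q ⊓ S) x : ℝ)/n))
      = -((1/(n:ℝ)) * Real.logb 2 (w x)) := by
    intro x
    have h1 := (cnt_pos' (Q ⊓ T) x).ne'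
    have h2 := (cnt_pos' S x).ne'
    have h3 := (cnt_pos' T x).ne'
    have h4 := (cnt_pos' (Q ⊓ S) x).ne'
    have hnne : (n:ℝ) ≠ 0 := hn'.ne'
    have e0 : Real.logb 2 (w x) = Real.logb 2 (cnt (Q ⊓ T) x) + Real.logb 2 (cnt S x)
        - Real.logb 2 (cnt T x) - Real.logb 2 (cnt (Q ⊓ S) x) := by
      simp only [hw_def]
      rw [Real.logb_div (mul_ne_zero h1 h2) (mul_ne_zero h3 h4),
        Real.logb_mul h1 h2, Real.logb_mul h3 h4]
      ring
    rw [e0, Real.logb_div h3 hnne, Real.logb_div h1 hnne,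
      Real.logb_div h2 hnne, Real.logb_div h4 hnne]
    ring
  have hsum2 : ∑ x : Fin n,
      ((1/(n:ℝ)) * Real.logb 2 ((cnt T x : ℝ)/n) - (1/(n:ℝ)) * Real.logb 2 ((cnt (Q ⊓ T) x : ℝ)/n)
      - ((1/(n:ℝ)) * Real.logb 2 ((cnt S x : ℝ)/n)
         - (1/(n:ℝ)) * Real.logb 2 ((cnt (Q ⊓ S) x : ℝ)/n)))
      = - ∑ x : Fin n, (1/(n:ℝ)) * Real.logb 2 (w x) := by
    rw [Finset.sum_congr rfl fun x _ => hx x, Finset.sum_neg_distrib]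
  rw [Finset.sum_sub_distrib, Finset.sum_sub_distrib, Finset.sum_sub_distrib] at hsum2
  rw [entropy_eq n (Q ⊓ S), entropy_eq n S, entropy_eq n (Q ⊓ T), entropy_eq n T]
  linarith [key, hsum2]

instance setoidFinite : Finite (Setoid (Fin n)) :=
  Finite.of_injective (fun s => s.r)
    (fun a b h => Setoid.ext fun x y => by rw [show a.r = b.r from h])

lemma entropy_antitone (hn : 1 ≤ n) {S T : Setoid (Fin n)} (h : S ≤ T) :
    entropy n T ≤ entropy n S := by
  have h2 := cond_le hn S S T h
  rw [inf_idem, inf_eq_left.mpr h] at h2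
  linarith

lemma exists_walk_le (hn : 1 ≤ n) (A B : Setoid (Fin n)) (h : A ≤ B) :
    ∃ W : (hasse n).Walk A B,
      walkWeight (entropy n) W = entropy n A - entropy n B := by
  have hwf : WellFounded ((· > ·) : Setoid (Fin n) → Setoid (Fin n) → Prop) :=
    Finite.to_wellFoundedGT.wf
  refine hwf.induction
    (C := fun A => ∀ B, A ≤ B → ∃ W : (hasse n).Walk A B,
      walkWeight (entropy n) W = entropy n A - entropy n B) A ?_ B h
  intro X IH B' hXB
  rcases eq_or_lt_of_le hXB with rfl | hlt
  · exact ⟨SimpleGraph.Walk.nil, by simp [walkWeight]⟩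
  · obtain ⟨C, hXC, hCB⟩ := exists_covBy_le_of_lt hlt
    obtain ⟨W, hW⟩ := IH C hXC.lt B' hCB
    refine ⟨SimpleGraph.Walk.cons (show (hasse n).Adj X C from Or.inl hXC) W, ?_⟩
    rw [walkWeight, SimpleGraph.Walk.edges_cons, List.map_cons, List.sum_cons]
    have he : eWeight (entropy n) s(X, C) = entropy n X - entropy n C := by
      rw [eWeight, Sym2.lift_mk]
      exact abs_of_nonneg (sub_nonneg.mpr (entropy_antitone hn hXC.le))
    rw [he, show (W.edges.map (eWeight (entropy n))).sum = walkWeight (entropy n) W from rfl, hW]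
    ring

lemma VI_le_walk (hn : 1 ≤ n) (P Q : Setoid (Fin n)) (W : (hasse n).Walk P Q) :
    VI n P Q ≤ walkWeight (entropy n) W := by
  induction W with
  | nil =>
    rename_i u
    have : walkWeight (entropy n) (SimpleGraph.Walk.nil : (hasse n).Walk u u) = 0 := by
      simp [walkWeight]
    rw [this, VI, inf_idem]
    linarith
  | @cons u v w h' p ih =>
    have hcons : walkWeight (entropy n) (SimpleGraph.Walk.cons h' p)
        = eWeight (entropy n) s(u, v) + walkWeight (entropy n) p := by
      rw [walkWeight, SimpleGraph.Walk.edges_cons, List.map_cons, List.sum_cons]; rfl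
    rw [hcons, eWeight, Sym2.lift_mk]
    show VI n u w ≤ |entropy n u - entropy n v| + walkWeight (entropy n) p
    cases h' with
    | inl huv =>
      have habs : |entropy n u - entropy n v| = entropy n u - entropy n v :=
        abs_of_nonneg (sub_nonneg.mpr (entropy_antitone hn huv.le))
      have hk := cond_le hn w u v huv.le
      rw [habs, VI] at *
      rw [inf_comm u w, inf_comm v w] at *
      linarith [ih]
    | inr hvu =>
      have habs : |entropy n u - entropy n v| = entropy n v - entropy n u :=
        (abs_sub_comm _ _).trans (abs_of_nonneg (sub_nonneg.mpr (entropy_antitone hn hvu.le)))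
      have hmono : entropy n (u ⊓ w) ≤ entropy n (v ⊓ w) :=
        entropy_antitone hn (inf_le_inf_right w hvu.le)
      rw [habs, VI] at *
      linarith [ih]

theorem main_aux (hn : 1 ≤ n) (P Q : Setoid (Fin n)) :
    deltaW (entropy n) P Q = VI n P Q := by
  obtain ⟨W₁, hW₁⟩ := exists_walk_le hn (P ⊓ Q) P inf_le_left
  obtain ⟨W₂, hW₂⟩ := exists_walk_le hn (P ⊓ Q) Q inf_le_right
  have hmem : VI n P Q ∈ {w : ℝ | ∃ W : (hasse n).Walk P Q, walkWeight (entropy n) W = w} := by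
    refine ⟨W₁.reverse.append W₂, ?_⟩
    have : walkWeight (entropy n) (W₁.reverse.append W₂)
        = walkWeight (entropy n) W₁ + walkWeight (entropy n) W₂ := by
      rw [walkWeight, SimpleGraph.Walk.edges_append, List.map_append, List.sum_append,
        SimpleGraph.Walk.edges_reverse, List.map_reverse, List.sum_reverse]
      rfl
    rw [this, hW₁, hW₂, VI]
    ring
  have hlb : ∀ w ∈ {w : ℝ | ∃ W : (hasse n).Walk P Q, walkWeight (entropy n) W = w},
      VI n P Q ≤ w := by
    rintro w ⟨W, rfl⟩
    exact VI_le_walk hn P Q W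
  exact le_antisymm (csInf_le ⟨VI n P Q, hlb⟩ hmem) (le_csInf ⟨_, hmem⟩ hlb)

/-- The variation of information is the minimum-entropy-weight partition
distance: `δ_e(P,Q) = VI(P,Q) = 2 e(P ⊓ Q) - e(P) - e(Q)`. -/
theorem deltaW_entropy_eq_VI (n : ℕ) (hn : 1 ≤ n) (P Q : Setoid (Fin n)) :
    deltaW (entropy n) P Q = VI n P Q ∧
    VI n P Q = 2 * entropy n (P ⊓ Q) - entropy n P - entropy n Q := by
  exact ⟨main_aux hn P Q, rfl⟩
end

section
/- Let n ≥ 1, m ≥ 1 and let x : Fin n → Fin m → ℝ be a membership matrix, i.e. x i l ≥ 0 for all i, l and ∑_{l} x i l = 1 for every i. Define η(x) on unordered pairs of distinct elements by η(x)_{ij} = ∑_{l} (x i l)·(x j l). Then: (i) if every entry x i l lies in {0,1}, then η(x) = I_P for some partition P of Fin n; and (ii) in general, η(x) lies in the convex hull (in the real vector space of functions on unordered pairs of distinct elements of Fin n) of the set of indicator vectors {I_P : P a partition of Fin n}. -/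
open scoped BigOperators


/-- The indicator vector `I_P` of a partition `P`, as a point of the real
vector space of functions from unordered pairs of distinct elements of
`Fin n` to `ℝ`: value `1` on `P`-equivalent pairs, `0` otherwise. -/
noncomputable def indicVec (n : ℕ) (P : Setoid (Fin n)) :
    {e : Sym2 (Fin n) // ¬ e.IsDiag} → ℝ := by
  classical
  exact fun e =>
    Sym2.lift ⟨fun i j => if P.r i j then (1 : ℝ) else 0, fun i j =>
      if_congr ⟨fun h => P.iseqv.symm h, fun h => P.iseqv.symm h⟩ rfl rfl⟩ e.1

/-- The map `η` sending a membership matrix `x` to the point whose value on an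
unordered pair `{i,j}` of distinct elements is `∑_l x i l · x j l`. -/
noncomputable def etaMap (n m : ℕ) (x : Fin n → Fin m → ℝ) :
    {e : Sym2 (Fin n) // ¬ e.IsDiag} → ℝ := fun e =>
  Sym2.lift ⟨fun i j => ∑ l, x i l * x j l, fun i j =>
    Finset.sum_congr rfl (fun l _ => mul_comm (x i l) (x j l))⟩ e.1

section aux
variable {n m : ℕ}

lemma key_lemma (x : Fin n → Fin m → ℝ) (hx1 : ∀ i, ∑ l, x i l = 1)
    (i j : Fin n) (hij : i ≠ j) :
    ∑ f : Fin n → Fin m, (∏ k, x k (f k)) * (if f i = f j then (1:ℝ) else 0)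
      = ∑ l, x i l * x j l := by
  classical
  set y : Fin m → Fin n → Fin m → ℝ := fun l k c =>
    x k c * ((if k = i then (if c = l then 1 else 0) else 1) *
      (if k = j then (if c = l then 1 else 0) else 1)) with hy
  have hδ : ∀ f : Fin n → Fin m,
      (if f i = f j then (1:ℝ) else 0)
        = ∑ l, (if f i = l then (1:ℝ) else 0) * (if f j = l then 1 else 0) := by
    intro f
    by_cases h : f i = f j <;> simp [h, Finset.sum_ite_eq, ite_and, mul_ite, Ne.symm]
  have hA : ∀ (l : Fin m) (f : Fin n → Fin m),
      (∏ k, x k (f k)) * ((if f i = l then (1:ℝ) else 0) * (if f j = l then 1 else 0))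
        = ∏ k, y l k (f k) := by
    intro l f
    simp only [hy, Finset.prod_mul_distrib]
    congr 1
    congr 1
    · rw [Finset.prod_ite_eq' Finset.univ i (fun k => if f k = l then (1:ℝ) else 0)]
      simp
    · rw [Finset.prod_ite_eq' Finset.univ j (fun k => if f k = l then (1:ℝ) else 0)]
      simp
  have hB : ∀ (l : Fin m) (k : Fin n),
      ∑ c, y l k c = (if k = i then x i l else 1) * (if k = j then x j l else 1) := by
    intro l k
    by_cases hki : k = i
    · subst hki
      have hkj : k ≠ j := hij
      simp [hy, hkj, mul_ite, Finset.sum_ite_eq]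
    · by_cases hkj : k = j
      · subst hkj
        simp [hy, hki, mul_ite, Finset.sum_ite_eq]
      · simp [hy, hki, hkj, hx1 k]
  have hC : ∀ l : Fin m,
      (∏ k, ((if k = i then x i l else 1) * (if k = j then x j l else 1)))
        = x i l * x j l := by
    intro l
    rw [Finset.prod_mul_distrib,
      Finset.prod_ite_eq' Finset.univ i (fun _ => x i l),
      Finset.prod_ite_eq' Finset.univ j (fun _ => x j l)]
    simp
  calc ∑ f : Fin n → Fin m, (∏ k, x k (f k)) * (if f i = f j then (1:ℝ) else 0)
      = ∑ f : Fin n → Fin m, ∑ l, ∏ k, y l k (f k) := by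
        refine Finset.sum_congr rfl fun f _ => ?_
        rw [hδ f, Finset.mul_sum]
        exact Finset.sum_congr rfl fun l _ => hA l f
    _ = ∑ l, ∑ f : Fin n → Fin m, ∏ k, y l k (f k) := Finset.sum_comm
    _ = ∑ l, ∏ k, ∑ c, y l k c := by
        refine Finset.sum_congr rfl fun l _ => ?_
        rw [Finset.prod_univ_sum]
        rw [Fintype.piFinset_univ]
    _ = ∑ l, x i l * x j l := by
        refine Finset.sum_congr rfl fun l _ => ?_
        rw [Finset.prod_congr rfl fun k _ => hB l k, hC l]

lemma weight_sum (x : Fin n → Fin m → ℝ) (hx1 : ∀ i, ∑ l, x i l = 1) :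
    ∑ f : Fin n → Fin m, ∏ k, x k (f k) = 1 := by
  classical
  rw [← Fintype.piFinset_univ, ← Finset.prod_univ_sum]
  simp [hx1]

end aux

lemma etaMap_eval {n m : ℕ} (x : Fin n → Fin m → ℝ) (i j : Fin n) (h : ¬ (s(i,j)).IsDiag) :
    etaMap n m x ⟨s(i,j), h⟩ = ∑ l, x i l * x j l := rfl

open scoped Classical in
lemma indicVec_eval {n : ℕ} (P : Setoid (Fin n)) (i j : Fin n) (h : ¬ (s(i,j)).IsDiag) :
    indicVec n P ⟨s(i,j), h⟩ = if P.r i j then (1:ℝ) else 0 := rfl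

/-- For a membership matrix `x` (nonnegative entries, rows summing to `1`):
(i) if all entries are `0` or `1`, then `η(x)` is the indicator vector of a
partition; (ii) in general `η(x)` lies in the convex hull of the indicator
vectors of partitions. -/
theorem etaMap_mem_partition_polytope (n m : ℕ) (hn : 1 ≤ n) (hm : 1 ≤ m)
    (x : Fin n → Fin m → ℝ) (hx0 : ∀ i l, 0 ≤ x i l) (hx1 : ∀ i, ∑ l, x i l = 1) :
    ((∀ i l, x i l = 0 ∨ x i l = 1) → ∃ P : Setoid (Fin n), etaMap n m x = indicVec n P) ∧
    etaMap n m x ∈ convexHull ℝ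
      {v : {e : Sym2 (Fin n) // ¬ e.IsDiag} → ℝ | ∃ P : Setoid (Fin n), v = indicVec n P} := by
  classical
  constructor
  · intro hx01
    have hex : ∀ i, ∃ l, x i l = 1 := by
      intro i
      by_contra h
      push_neg at h
      have : ∑ l, x i l = 0 := Finset.sum_eq_zero fun l _ =>
        (hx01 i l).resolve_right (h l)
      rw [hx1 i] at this
      exact one_ne_zero this
    choose f hf using hex
    have hxind : ∀ i l, x i l = if l = f i then 1 else 0 := by
      intro i l
      by_cases h : l = f i
      · simp [h, hf]
      · simp only [h, if_false]
        have h0 : ∑ c ∈ Finset.univ.erase (f i), x i c = 0 := by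
          have h1 := hx1 i
          rw [← Finset.add_sum_erase _ _ (Finset.mem_univ (f i)), hf i] at h1
          linarith
        exact (Finset.sum_eq_zero_iff_of_nonneg (fun c _ => hx0 i c)).mp h0 l
          (Finset.mem_erase.mpr ⟨h, Finset.mem_univ l⟩)
    refine ⟨Setoid.ker f, ?_⟩
    funext e
    obtain ⟨e, he⟩ := e
    induction e using Sym2.ind with
    | _ i j =>
      rw [etaMap_eval, indicVec_eval]
      have : ∑ l, x i l * x j l
          = ∑ l, if l = f i then (if l = f j then (1:ℝ) else 0) else 0 := by
        refine Finset.sum_congr rfl fun l _ => ?_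
        rw [hxind i l, hxind j l]
        by_cases h1 : l = f i <;> by_cases h2 : l = f j <;> simp [h1, h2]
      rw [this, Finset.sum_ite_eq' Finset.univ (f i)
        (fun l => if l = f j then (1:ℝ) else 0)]
      simp only [Finset.mem_univ, if_true]
      by_cases h : f i = f j <;> simp [Setoid.ker, Function.onFun, h]
  · set w : (Fin n → Fin m) → ℝ := fun f => ∏ k, x k (f k) with hw
    have hw0 : ∀ f, 0 ≤ w f := fun f => Finset.prod_nonneg fun k _ => hx0 k (f k)
    have hws : ∑ f, w f = 1 := weight_sum x hx1
    have hmem := Finset.centerMass_mem_convexHull (Finset.univ (α := Fin n → Fin m))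
      (s := {v : {e : Sym2 (Fin n) // ¬ e.IsDiag} → ℝ | ∃ P : Setoid (Fin n), v = indicVec n P})
      (w := w) (z := fun f => indicVec n (Setoid.ker f))
      (fun f _ => hw0 f) (by rw [hws]; exact one_pos)
      (fun f _ => ⟨Setoid.ker f, rfl⟩)
    rw [Finset.centerMass_eq_of_sum_1 _ _ hws] at hmem
    convert hmem using 1
    funext e
    obtain ⟨e, he⟩ := e
    induction e using Sym2.ind with
    | _ i j =>
      have hij : i ≠ j := by simpa using he
      rw [etaMap_eval, ← key_lemma x hx1 i j hij]
      rw [Finset.sum_apply]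
      refine Finset.sum_congr rfl fun f _ => ?_
      rw [Pi.smul_apply, smul_eq_mul, indicVec_eval]
      congr 1
      by_cases h : f i = f j <;> simp [Setoid.ker, Function.onFun, h]
end
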